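/- Let S=(1,s_2,s_3,...) be a packing sequence and define S'=(s_1',s_2',...) by s_i' = ⌊s_{i+1}/2⌋ for every i ≥ 1. Then for every n ≥ 2, χ_S(P_n) = χ_{S'}(P_{⌊n/2⌋}) + 1. -/

import Mathlib

open SimpleGraph

/-- `IsSPackingColoring G s φ` : `φ` is an `S`-packing coloring of `G` with colors
`Fin k`, where the value `s i` represents the entry `s_{i+1}` of the packing
sequence `S = (s_1, s_2, …)` (0-indexed encoding), and the color `j : Fin k`
represents color `j+1`: two distinct vertices sharing a color `i` (1-indexed)
must be at distance greater than `s_i`. -/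
def IsSPackingColoring {V : Type*} (G : SimpleGraph V) (s : ℕ → ℕ) {k : ℕ}
    (φ : V → Fin k) : Prop :=
  ∀ u v : V, u ≠ v → φ u = φ v → (s (φ u) : ℕ∞) < G.edist u v

/-- The `S`-packing chromatic number of `G`: the least `k` admitting an
`S`-packing `k`-coloring. -/
noncomputable def SPackingChromatic {V : Type*} (G : SimpleGraph V) (s : ℕ → ℕ) : ℕ :=
  sInf {k | ∃ φ : V → Fin k, IsSPackingColoring G s φ}

/-- `G` is `χ_S`-critical: every proper subgraph has a strictly smaller
`S`-packing chromatic number. -/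
def SCritical {V : Type*} (G : SimpleGraph V) (s : ℕ → ℕ) : Prop :=
  ∀ H : G.Subgraph, H ≠ ⊤ → SPackingChromatic H.coe s < SPackingChromatic G s

/-- `G` is `χ_S`-vertex-critical: deleting any vertex strictly decreases the
`S`-packing chromatic number. -/
def SVertexCritical {V : Type*} (G : SimpleGraph V) (s : ℕ → ℕ) : Prop :=
  ∀ v : V, SPackingChromatic (G.induce {u | u ≠ v}) s < SPackingChromatic G s

set_option maxHeartbeats 1000000 in
lemma pg_walk_len {n : ℕ} {u v : Fin n} (p : (pathGraph n).Walk u v) :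
    max u.1 v.1 - min u.1 v.1 ≤ p.length := by
  induction p with
  | nil => simp
  | cons h p ih =>
    rw [pathGraph_adj] at h
    rw [Walk.length_cons]
    omega

lemma pg_edist_le {n : ℕ} : ∀ d (u v : Fin n), u.1 + d = v.1 →
    (pathGraph n).edist u v ≤ (d : ℕ∞) := by
  intro d
  induction d with
  | zero =>
    intro u v h
    have : u = v := Fin.ext (by omega)
    simp [this]
  | succ d ih =>
    intro u v h
    have hlt : u.1 + 1 < n := by omega
    set w : Fin n := ⟨u.1 + 1, hlt⟩ with hw
    have hadj : (pathGraph n).Adj u w := pathGraph_adj.mpr (Or.inl rfl)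
    calc (pathGraph n).edist u v ≤ (pathGraph n).edist u w + (pathGraph n).edist w v :=
          SimpleGraph.edist_triangle
      _ ≤ 1 + (d : ℕ∞) := by
          gcongr
          · exact le_of_eq (edist_eq_one_iff_adj.mpr hadj)
          · exact ih w v (by simp [hw]; omega)
      _ = ((d + 1 : ℕ) : ℕ∞) := by push_cast; ring

lemma pg_edist {n : ℕ} (u v : Fin n) :
    (pathGraph n).edist u v = ((max u.1 v.1 - min u.1 v.1 : ℕ) : ℕ∞) := by
  apply le_antisymm
  · rcases le_total u.1 v.1 with h | h
    · have := pg_edist_le (v.1 - u.1) u v (by omega)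
      rw [show max u.1 v.1 - min u.1 v.1 = v.1 - u.1 by omega]
      exact this
    · have := pg_edist_le (u.1 - v.1) v u (by omega)
      rw [SimpleGraph.edist_comm]
      rw [show max u.1 v.1 - min u.1 v.1 = u.1 - v.1 by omega]
      exact this
  · rw [SimpleGraph.edist]
    exact le_iInf fun p => by exact_mod_cast pg_walk_len p

/-- The "key" numeric form of the coloring condition on paths. -/
lemma pg_key {n k : ℕ} {s : ℕ → ℕ} {φ : Fin n → Fin k}
    (hφ : IsSPackingColoring (pathGraph n) s φ) {u v : Fin n} (h1 : u ≠ v)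
    (h2 : φ u = φ v) : s (φ u) < max u.1 v.1 - min u.1 v.1 := by
  have := hφ u v h1 h2
  rw [pg_edist] at this
  exact_mod_cast this

lemma upper_lemma {n k : ℕ} {s : ℕ → ℕ} (h1 : s 0 = 1) (hn : 2 ≤ n)
    (ψ : Fin (n / 2) → Fin k)
    (hψ : IsSPackingColoring (pathGraph (n / 2)) (fun i => s (i + 1) / 2) ψ) :
    ∃ φ : Fin n → Fin (k + 1), IsSPackingColoring (pathGraph n) s φ := by
  have hhalf : ∀ v : Fin n, v.1 % 2 = 1 → v.1 / 2 < n / 2 := by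
    intro v hv
    have := v.2
    omega
  refine ⟨fun v => if h : v.1 % 2 = 1 then Fin.succ (ψ ⟨v.1 / 2, hhalf v h⟩) else 0, ?_⟩
  intro u v hne heq
  rw [pg_edist]
  have huv : u.1 ≠ v.1 := fun h => hne (Fin.ext h)
  by_cases hu : u.1 % 2 = 1 <;> by_cases hv : v.1 % 2 = 1 <;>
    simp only [hu, hv, dif_pos, dif_neg, reduceDIte] at heq ⊢
  · -- both odd
    have hsi : ψ ⟨u.1 / 2, hhalf u hu⟩ = ψ ⟨v.1 / 2, hhalf v hv⟩ :=
      Fin.succ_injective _ heq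
    by_cases hpp : (⟨u.1 / 2, hhalf u hu⟩ : Fin (n / 2)) = ⟨v.1 / 2, hhalf v hv⟩
    · exfalso
      have : u.1 / 2 = v.1 / 2 := congrArg Fin.val hpp
      omega
    · have := pg_key hψ hpp hsi
      simp only at this
      rw [Fin.val_succ]
      have h2 : 2 * (s ((ψ ⟨u.1 / 2, hhalf u hu⟩ : Fin k) + 1) / 2) ≤
          s ((ψ ⟨u.1 / 2, hhalf u hu⟩ : Fin k) + 1) := Nat.mul_div_le _ 2 |>.trans (le_refl _)
      have h3 : s ((ψ ⟨u.1 / 2, hhalf u hu⟩ : Fin k) + 1) <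
          2 * (s ((ψ ⟨u.1 / 2, hhalf u hu⟩ : Fin k) + 1) / 2) + 2 := by omega
      -- goal: ↑(s (↑(ψ _).succ)) < ↑(max u v - min u v)
      have goal_nat : s ((ψ ⟨u.1 / 2, hhalf u hu⟩ : Fin k) + 1) < max u.1 v.1 - min u.1 v.1 := by
        omega
      exact_mod_cast goal_nat
  · exact absurd heq (Fin.succ_ne_zero _)
  · exact absurd heq.symm (Fin.succ_ne_zero _)
  · -- both even
    have goal_nat : s ((0 : Fin (k+1)) : ℕ) < max u.1 v.1 - min u.1 v.1 := by
      simp only [Fin.val_zero, h1]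
      omega
    exact_mod_cast goal_nat

set_option maxHeartbeats 1000000 in
lemma lower_lemma {n k : ℕ} {s : ℕ → ℕ} (h1 : s 0 = 1) (hn : 2 ≤ n)
    (φ : Fin n → Fin (k + 1))
    (hφ : IsSPackingColoring (pathGraph n) s φ) :
    ∃ ψ : Fin (n / 2) → Fin k,
      IsSPackingColoring (pathGraph (n / 2)) (fun i => s (i + 1) / 2) ψ := by
  classical
  set A : Finset (Fin n) := Finset.univ.filter (fun v => φ v ≠ 0) with hA
  have hmemA : ∀ v : Fin n, v ∈ A ↔ φ v ≠ 0 := by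
    intro v; simp [hA]
  have hadj0 : ∀ u v : Fin n, u.1 + 1 = v.1 → φ u = 0 → φ v = 0 → False := by
    intro u v huv h0u h0v
    have hne : u ≠ v := fun h => by rw [h] at huv; omega
    have := pg_key hφ hne (h0u.trans h0v.symm)
    rw [h0u] at this
    simp only [Fin.val_zero, h1] at this
    omega
  have hpair : ∀ j : Fin (n / 2), 2 * j.1 + 1 < n := by
    intro j; have := j.2; omega
  have hpair2 : ∀ j : Fin (n / 2), 2 * j.1 < n := fun j => by have := hpair j; omega
  let f : Fin (n / 2) → Fin n := fun j =>
    if φ ⟨2 * j.1, hpair2 j⟩ = 0 then ⟨2 * j.1 + 1, hpair j⟩ else ⟨2 * j.1, hpair2 j⟩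
  have hfA : ∀ j, f j ∈ A := by
    intro j
    rw [hmemA]
    by_cases h : φ ⟨2 * j.1, hpair2 j⟩ = 0
    · simp only [f, if_pos h]
      intro h2
      exact hadj0 ⟨2 * j.1, hpair2 j⟩ ⟨2 * j.1 + 1, hpair j⟩ rfl h h2
    · simpa only [f, if_neg h] using h
  have hfval : ∀ j : Fin (n / 2), (f j).1 = 2 * j.1 ∨ (f j).1 = 2 * j.1 + 1 := by
    intro j
    by_cases h : φ ⟨2 * j.1, hpair2 j⟩ = 0
    · right; simp [f, if_pos h]
    · left; simp [f, if_neg h]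
  have hcard : n / 2 ≤ A.card := by
    have hinj : Set.InjOn f (Finset.univ : Finset (Fin (n / 2))) := by
      intro a _ b _ hab
      have ha := hfval a
      have hb := hfval b
      have : (f a).1 = (f b).1 := congrArg Fin.val hab
      exact Fin.ext (by omega)
    have h := Finset.card_le_card_of_injOn (s := (Finset.univ : Finset (Fin (n / 2))))
      (t := A) f (fun j _ => hfA j) hinj
    simpa using h
  let e : Fin A.card ↪o Fin n := A.orderEmbOfFin rfl
  have heA : ∀ i, e i ∈ A := fun i => A.orderEmbOfFin_mem rfl i
  have hsurj : ∀ a ∈ A, ∃ i, e i = a := by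
    intro a ha
    have : a ∈ Set.range e := by
      rw [Finset.range_orderEmbOfFin]; exact_mod_cast ha
    exact this
  -- ℕ-valued enumeration
  let vv : ℕ → ℕ := fun j => if h : j < A.card then (e ⟨j, h⟩).1 else 0
  have hvv : ∀ (j : ℕ) (h : j < A.card), vv j = (e ⟨j, h⟩).1 := fun j h => dif_pos h
  have hvlt : ∀ (j : ℕ), j < A.card → vv j < n := by
    intro j h
    rw [hvv j h]
    exact (e ⟨j, h⟩).2
  have hvmono : ∀ (i j : ℕ) (hi : i < A.card) (hj : j < A.card), i < j → vv i < vv j := by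
    intro i j hi hj hij
    rw [hvv i hi, hvv j hj]
    exact Fin.lt_def.mp (e.strictMono (Fin.lt_def.mpr hij))
  have hgap : ∀ (j : ℕ), j + 1 < A.card → vv (j + 1) ≤ vv j + 2 := by
    intro j h
    have h' : j < A.card := by omega
    by_contra hcon
    push_neg at hcon
    rw [hvv (j+1) h, hvv j h'] at hcon
    have hbound : (e ⟨j, h'⟩).1 + 2 < n := lt_trans hcon (e ⟨j + 1, h⟩).2
    have hnotA : ∀ c : Fin n, (e ⟨j, h'⟩).1 < c.1 → c.1 < (e ⟨j + 1, h⟩).1 → c ∉ A := by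
      intro c hc1 hc2 hcA
      obtain ⟨i, hi⟩ := hsurj c hcA
      have hlt1 : (⟨j, h'⟩ : Fin A.card) < i := by
        rw [← e.lt_iff_lt, hi]
        exact Fin.lt_def.mpr hc1
      have hlt2 : i < ⟨j + 1, h⟩ := by
        rw [← e.lt_iff_lt, hi]
        exact Fin.lt_def.mpr hc2
      rw [Fin.lt_def] at hlt1 hlt2
      simp only at hlt1 hlt2
      omega
    have haA := hnotA ⟨(e ⟨j, h'⟩).1 + 1, by omega⟩
      (by show (e ⟨j, h'⟩).1 < (e ⟨j, h'⟩).1 + 1; omega)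
      (by show (e ⟨j, h'⟩).1 + 1 < (e ⟨j + 1, h⟩).1; omega)
    have hbA := hnotA ⟨(e ⟨j, h'⟩).1 + 2, by omega⟩
      (by show (e ⟨j, h'⟩).1 < (e ⟨j, h'⟩).1 + 2; omega)
      (by show (e ⟨j, h'⟩).1 + 2 < (e ⟨j + 1, h⟩).1; omega)
    rw [hmemA, not_not] at haA hbA
    exact hadj0 _ _ rfl haA hbA
  have hcum : ∀ (d p : ℕ), p + d < A.card → vv (p + d) ≤ vv p + 2 * d := by
    intro d
    induction d with
    | zero => intro p h; simp
    | succ d ih =>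
      intro p h
      have h' : p + d < A.card := by omega
      have hg := hgap (p + d) (by omega)
      have hi := ih p h'
      have : p + (d + 1) = (p + d) + 1 := by omega
      rw [this]
      omega
  -- the S'-coloring
  have hEc : ∀ j : Fin (n / 2), j.1 < A.card := fun j => lt_of_lt_of_le j.2 hcard
  let E : Fin (n / 2) → Fin n := fun j => e ⟨j.1, hEc j⟩
  have hEvv : ∀ j : Fin (n / 2), (E j).1 = vv j.1 := fun j => (hvv j.1 (hEc j)).symm
  have hE0 : ∀ j, φ (E j) ≠ 0 := fun j => (hmemA _).mp (heA _)
  have hEval : ∀ j, 1 ≤ (φ (E j)).1 := by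
    intro j
    have := hE0 j
    have h2 : (φ (E j)).1 ≠ 0 := fun h => this (Fin.ext h)
    omega
  have hElt : ∀ j, (φ (E j)).1 < k + 1 := fun j => (φ (E j)).2
  refine ⟨fun j => ⟨(φ (E j)).1 - 1, by have := hEval j; have := hElt j; omega⟩, ?_⟩
  have main : ∀ p q : Fin (n / 2), p.1 < q.1 → φ (E p) = φ (E q) →
      s ((φ (E p)).1) < 2 * (q.1 - p.1) := by
    intro p q hpq hfeq
    have hEne : E p ≠ E q := by
      intro h
      have := congrArg Fin.val (e.injective h)
      simp only at this
      omega
    have hkey := pg_key hφ hEne hfeq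
    have hmono : (E p).1 < (E q).1 := by
      rw [hEvv p, hEvv q]
      exact hvmono p.1 q.1 (hEc p) (hEc q) hpq
    rw [Nat.max_eq_right (le_of_lt hmono), Nat.min_eq_left (le_of_lt hmono)] at hkey
    have hcb := hcum (q.1 - p.1) p.1 (by have := hEc q; omega)
    have hq' : p.1 + (q.1 - p.1) = q.1 := by omega
    rw [hq'] at hcb
    rw [hEvv p, hEvv q] at hkey hmono
    omega
  intro p q hne heq
  rw [pg_edist]
  have hfeq : φ (E p) = φ (E q) := by
    have h2 : (φ (E p)).1 - 1 = (φ (E q)).1 - 1 := congrArg Fin.val heq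
    have := hEval p
    have := hEval q
    exact Fin.ext (by omega)
  have hvne : p.1 ≠ q.1 := fun h => hne (Fin.ext h)
  have goal_nat : s (((φ (E p)).1 - 1) + 1) / 2 < max p.1 q.1 - min p.1 q.1 := by
    have hrw : (φ (E p)).1 - 1 + 1 = (φ (E p)).1 := by have := hEval p; omega
    rw [hrw]
    rcases lt_or_gt_of_ne hvne with h | h
    · have hm := main p q h hfeq
      rw [Nat.max_eq_right (le_of_lt h), Nat.min_eq_left (le_of_lt h)]
      omega
    · have hm := main q p h hfeq.symm
      rw [hfeq]
      rw [Nat.max_eq_left (le_of_lt h), Nat.min_eq_right (le_of_lt h)]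
      omega
  exact_mod_cast goal_nat

theorem stmt2 (s : ℕ → ℕ) (hmono : Monotone s) (hpos : ∀ i, 1 ≤ s i)
    (h1 : s 0 = 1) (n : ℕ) (hn : 2 ≤ n) :
    SPackingChromatic (pathGraph n) s
      = SPackingChromatic (pathGraph (n / 2)) (fun i => s (i + 1) / 2) + 1 := by
  have hne1 : {k | ∃ φ : Fin n → Fin k, IsSPackingColoring (pathGraph n) s φ}.Nonempty :=
    ⟨n, fun v => v, fun u v h hh => absurd hh h⟩
  have hne2 : {k | ∃ φ : Fin (n / 2) → Fin k,
      IsSPackingColoring (pathGraph (n / 2)) (fun i => s (i + 1) / 2) φ}.Nonempty :=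
    ⟨n / 2, fun v => v, fun u v h hh => absurd hh h⟩
  have h1mem : SPackingChromatic (pathGraph n) s ∈
      {k | ∃ φ : Fin n → Fin k, IsSPackingColoring (pathGraph n) s φ} :=
    Nat.sInf_mem hne1
  have hL1 : 1 ≤ SPackingChromatic (pathGraph n) s := by
    by_contra hc
    push_neg at hc
    have h0 : SPackingChromatic (pathGraph n) s = 0 := by omega
    rw [h0] at h1mem
    obtain ⟨φ, -⟩ := h1mem
    exact (φ ⟨0, by omega⟩).elim0
  obtain ⟨k, hk⟩ : ∃ k, SPackingChromatic (pathGraph n) s = k + 1 :=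
    ⟨SPackingChromatic (pathGraph n) s - 1, by omega⟩
  rw [hk] at h1mem
  obtain ⟨φ, hφ⟩ := h1mem
  obtain ⟨ψ, hψ⟩ := lower_lemma h1 hn φ hφ
  have hR : SPackingChromatic (pathGraph (n / 2)) (fun i => s (i + 1) / 2) ≤ k :=
    Nat.sInf_le ⟨ψ, hψ⟩
  obtain ⟨ψ0, hψ0⟩ := Nat.sInf_mem hne2
  obtain ⟨φ0, hφ0⟩ := upper_lemma h1 hn ψ0 hψ0
  have hL2 : SPackingChromatic (pathGraph n) s ≤
      SPackingChromatic (pathGraph (n / 2)) (fun i => s (i + 1) / 2) + 1 :=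
    Nat.sInf_le ⟨φ0, hφ0⟩
  omega
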